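/- Let n ≥ 3 be an integer, ℓ > 0, r₀ > 0, a ∈ ℝ, r₊ > 0, and define V : (0,∞) → ℝ by V(r) = (r²/ℓ²)(1 + a/r^{n−1} − r₀ⁿ/rⁿ), assumed positive on (r₊, ∞). Define the mean curvature H(r) := V(r)^{−1/2}·(V'(r)/2 + (n−2)·V(r)/r) for r > r₊. Then lim_{r→∞} rⁿ·(H(r) − (n−1)/ℓ) = r₀ⁿ/(2ℓ); i.e., H(r) = (n−1)/ℓ + r₀ⁿ/(2ℓrⁿ) + o(r^{−n}) as r → ∞. -/

import Mathlib

open Filter Topology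

/-- the mean curvature H(r) = V^{−1/2}(V'/2 + (n−2)V/r) satisfies
H(r) = (n−1)/ℓ + r₀ⁿ/(2ℓrⁿ) + o(r^{−n}), i.e. rⁿ(H(r) − (n−1)/ℓ) → r₀ⁿ/(2ℓ).) -/
theorem stmt_11 (n : ℕ) (hn : 3 ≤ n) (ℓ r₀ : ℝ) (hℓ : 0 < ℓ) (hr₀ : 0 < r₀) (a : ℝ)
    (rp : ℝ) (hrp : 0 < rp)
    (V : ℝ → ℝ)
    (hV : ∀ r > (0 : ℝ), V r = r ^ 2 / ℓ ^ 2 * (1 + a / r ^ (n - 1) - r₀ ^ n / r ^ n))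
    (hVpos : ∀ r > rp, 0 < V r)
    (H : ℝ → ℝ)
    (hH : ∀ r > rp, H r = (Real.sqrt (V r))⁻¹ * (deriv V r / 2 + ((n : ℝ) - 2) * V r / r)) :
    Tendsto (fun r => r ^ n * (H r - ((n : ℝ) - 1) / ℓ)) atTop
      (nhds (r₀ ^ n / (2 * ℓ))) := by
  obtain ⟨m, rfl⟩ : ∃ m, n = m + 3 := ⟨n - 3, by omega⟩
  have hℓ' : ℓ ≠ 0 := hℓ.ne'
  set σ : ℝ → ℝ := fun r => Real.sqrt (1 + a / r ^ (m + 2) - r₀ ^ (m + 3) / r ^ (m + 3))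
    with hσdef
  have hz : ∀ (c : ℝ) (k : ℕ), k ≠ 0 → Tendsto (fun r : ℝ => c / r ^ k) atTop (nhds 0) :=
    fun c k hk => tendsto_const_nhds.div_atTop (tendsto_pow_atTop hk)
  have hW1 : Tendsto (fun r : ℝ => 1 + a / r ^ (m + 2) - r₀ ^ (m + 3) / r ^ (m + 3))
      atTop (nhds 1) := by
    have := ((tendsto_const_nhds (x := (1:ℝ))).add (hz a (m+2) (by omega))).sub
      (hz (r₀ ^ (m+3)) (m+3) (by omega))
    simpa using this
  have hσ1 : Tendsto σ atTop (nhds 1) := by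
    have := (Real.continuous_sqrt.tendsto 1).comp hW1
    simpa [hσdef, Real.sqrt_one, Function.comp_def] using this
  -- limit of the explicit function G
  have hGlim : Tendsto (fun r : ℝ =>
      (((m:ℝ)+2) * a * (a / r ^ (m+1) - r₀ ^ (m+3) / r ^ (m+2)) / (2 * (σ r + 1) ^ 2)
        - ((m:ℝ)+2) * σ r * r₀ ^ (m+3) / (σ r + 1)
        + ((m:ℝ)+3) * r₀ ^ (m+3) / 2) / (ℓ * σ r)) atTop
      (nhds (r₀ ^ (m+3) / (2 * ℓ))) := by
    have t1 : Tendsto (fun r : ℝ => a / r ^ (m+1) - r₀ ^ (m+3) / r ^ (m+2)) atTop (nhds 0) := by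
      simpa using (hz a (m+1) (by omega)).sub (hz (r₀ ^ (m+3)) (m+2) (by omega))
    have tA : Tendsto (fun r : ℝ =>
        ((m:ℝ)+2) * a * (a / r ^ (m+1) - r₀ ^ (m+3) / r ^ (m+2)) / (2 * (σ r + 1) ^ 2)) atTop
        (nhds ((((m:ℝ)+2) * a * 0) / (2 * ((1:ℝ)+1) ^ 2))) :=
      (tendsto_const_nhds.mul t1).div
        (tendsto_const_nhds.mul ((hσ1.add tendsto_const_nhds).pow 2)) (by norm_num)
    have tB : Tendsto (fun r : ℝ => ((m:ℝ)+2) * σ r * r₀ ^ (m+3) / (σ r + 1)) atTop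
        (nhds (((m:ℝ)+2) * 1 * r₀ ^ (m+3) / ((1:ℝ) + 1))) :=
      ((tendsto_const_nhds.mul hσ1).mul tendsto_const_nhds).div
        (hσ1.add tendsto_const_nhds) (by norm_num)
    have tC : Tendsto (fun r : ℝ => ℓ * σ r) atTop (nhds (ℓ * 1)) :=
      tendsto_const_nhds.mul hσ1
    have := ((tA.sub tB).add (tendsto_const_nhds (x := ((m:ℝ)+3) * r₀ ^ (m+3) / 2))).div tC
      (by simpa using hℓ')
    convert this using 2
    · rfl
    field_simp
    ring
  refine Tendsto.congr' ?_ hGlim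
  filter_upwards [eventually_gt_atTop (max rp 0)] with r hr
  have hr0 : (0:ℝ) < r := lt_of_le_of_lt (le_max_right _ _) hr
  have hrp' : rp < r := lt_of_le_of_lt (le_max_left _ _) hr
  have hVr : V r = r ^ 2 / ℓ ^ 2 * (1 + a / r ^ (m + 2) - r₀ ^ (m + 3) / r ^ (m + 3)) := by
    have h := hV r hr0
    rw [show m + 3 - 1 = m + 2 by omega] at h
    exact h
  have hWpos : 0 < 1 + a / r ^ (m + 2) - r₀ ^ (m + 3) / r ^ (m + 3) := by
    have h := hVpos r hrp'
    rw [hVr] at h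
    have hc : 0 < r ^ 2 / ℓ ^ 2 := by positivity
    by_contra hcon
    push_neg at hcon
    nlinarith [mul_nonpos_of_nonneg_of_nonpos hc.le hcon]
  have hσpos : 0 < σ r := Real.sqrt_pos.mpr hWpos
  have hσsq : σ r ^ 2 = 1 + a / r ^ (m + 2) - r₀ ^ (m + 3) / r ^ (m + 3) :=
    Real.sq_sqrt hWpos.le
  have hsqrtV : Real.sqrt (V r) = r / ℓ * σ r := by
    rw [hVr, show r ^ 2 / ℓ ^ 2 * (1 + a / r ^ (m + 2) - r₀ ^ (m + 3) / r ^ (m + 3))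
        = (r / ℓ) ^ 2 * (1 + a / r ^ (m + 2) - r₀ ^ (m + 3) / r ^ (m + 3)) by ring,
      Real.sqrt_mul (by positivity), Real.sqrt_sq (by positivity)]
  -- derivative of V at r
  have hd1 : HasDerivAt (fun x : ℝ => x ^ 2 / ℓ ^ 2) (2 * r / ℓ ^ 2) r := by
    simpa using (hasDerivAt_pow 2 r).div_const (ℓ ^ 2)
  have hd2 : HasDerivAt (fun x : ℝ => a / x ^ (m + 2)) (-((m:ℝ)+2) * a / r ^ (m+3)) r := by
    have h := (hasDerivAt_const r a).div (hasDerivAt_pow (m+2) r) (pow_ne_zero _ hr0.ne')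
    rw [show m + 2 - 1 = m + 1 by omega] at h
    refine h.congr_deriv ?_
    push_cast
    field_simp
    ring
  have hd3 : HasDerivAt (fun x : ℝ => r₀ ^ (m + 3) / x ^ (m + 3))
      (-((m:ℝ)+3) * r₀ ^ (m+3) / r ^ (m+4)) r := by
    have h := (hasDerivAt_const r (r₀ ^ (m+3))).div (hasDerivAt_pow (m+3) r)
      (pow_ne_zero _ hr0.ne')
    rw [show m + 3 - 1 = m + 2 by omega] at h
    refine h.congr_deriv ?_
    push_cast
    field_simp
    ring
  have hdV : HasDerivAt (fun x : ℝ =>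
      x ^ 2 / ℓ ^ 2 * (1 + a / x ^ (m + 2) - r₀ ^ (m + 3) / x ^ (m + 3)))
      (2 * r / ℓ ^ 2 * (1 + a / r ^ (m + 2) - r₀ ^ (m + 3) / r ^ (m + 3))
        + r ^ 2 / ℓ ^ 2 * (-((m:ℝ)+2) * a / r ^ (m+3) + ((m:ℝ)+3) * r₀ ^ (m+3) / r ^ (m+4))) r := by
    have h := hd1.mul (((hasDerivAt_const r (1:ℝ)).add hd2).sub hd3)
    refine h.congr_deriv ?_
    simp only [Pi.add_apply, Pi.sub_apply]
    ring
  have hderiv : deriv V r = 2 * r / ℓ ^ 2 * (1 + a / r ^ (m + 2) - r₀ ^ (m + 3) / r ^ (m + 3))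
      + r ^ 2 / ℓ ^ 2 * (-((m:ℝ)+2) * a / r ^ (m+3) + ((m:ℝ)+3) * r₀ ^ (m+3) / r ^ (m+4)) := by
    have hev : V =ᶠ[nhds r] fun x : ℝ =>
        x ^ 2 / ℓ ^ 2 * (1 + a / x ^ (m + 2) - r₀ ^ (m + 3) / x ^ (m + 3)) := by
      filter_upwards [isOpen_Ioi.mem_nhds (show r ∈ Set.Ioi (0:ℝ) from hr0)] with x hx
      have h := hV x hx
      rw [show m + 3 - 1 = m + 2 by omega] at h
      exact h
    rw [hev.deriv_eq, hdV.deriv]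
  have ha : a = (σ r ^ 2 - 1 + r₀ ^ (m + 3) / r ^ (m + 3)) * r ^ (m + 2) := by
    rw [hσsq]
    field_simp
    ring
  have hσ1ne : σ r + 1 ≠ 0 := by positivity
  rw [hH r hrp', hsqrtV, hderiv, hVr]
  rw [ha]
  field_simp
  push_cast
  ring
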